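/- For all nonnegative integers $v$ and nonzero real $n$, $\sum_{j=0}^{v}\binom{v+1/2}{v-j}\binom{v-1/2}{j}\frac{1}{n^{2j+1}} = 2^{-2v-1}\binom{2v}{v}\left(\left(1+\frac{1}{n}\right)^{2v+1} - \left(1-\frac{1}{n}\right)^{2v+1}\right)$. -/

import Mathlib

/-- The generalized binomial coefficient `x(x-1)⋯(x-m+1)/m!` for real `x`. -/
noncomputable def rchoose (x : ℝ) (m : ℕ) : ℝ :=
  (∏ i ∈ Finset.range m, (x - i)) / (m.factorial : ℝ)

lemma rchoose_zero (x : ℝ) : rchoose x 0 = 1 := by simp [rchoose]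

lemma rchoose_succ (x : ℝ) (m : ℕ) :
    rchoose x (m + 1) = rchoose x m * (x - m) / (m + 1) := by
  simp only [rchoose, Finset.prod_range_succ, Nat.factorial_succ]
  push_cast
  rw [div_mul_eq_mul_div, div_div, mul_comm ((m.factorial : ℝ)) ((m:ℝ)+1)]

lemma rchoose_shift (x : ℝ) (m : ℕ) :
    rchoose (x + 1) (m + 1) = rchoose x m * (x + 1) / (m + 1) := by
  simp only [rchoose, Nat.factorial_succ]
  rw [Finset.prod_range_succ']
  have : ∀ i ∈ Finset.range m, (x + 1 - (((i:ℕ) + 1 : ℕ) : ℝ)) = x - i := by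
    intro i _; push_cast; ring
  rw [Finset.prod_congr rfl this]
  push_cast
  rw [div_mul_eq_mul_div, div_div, mul_comm ((m.factorial : ℝ)) ((m:ℝ)+1)]
  norm_num

lemma rchoose_base (v : ℕ) :
    rchoose ((v : ℝ) + 1/2) v * 4 ^ v = ((2*v).choose v : ℝ) * (2*v+1) := by
  induction v with
  | zero => simp [rchoose_zero]
  | succ v ih =>
    have hx : ((v+1 : ℕ) : ℝ) + 1/2 = ((v:ℝ) + 1/2) + 1 := by push_cast; ring
    rw [hx, rchoose_shift]
    have A : ((2*v+1 : ℕ) : ℝ) * ((2*v).choose v : ℝ) = ((2*v+1).choose (v+1) : ℝ) * (v+1) := by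
      exact_mod_cast congrArg (Nat.cast (R := ℝ)) (Nat.add_one_mul_choose_eq (2*v) v)
    have B : ((2*v+2 : ℕ) : ℝ) * ((2*v+1).choose v : ℝ) = ((2*v+2).choose (v+1) : ℝ) * (v+1) := by
      exact_mod_cast congrArg (Nat.cast (R := ℝ)) (Nat.add_one_mul_choose_eq (2*v+1) v)
    have S : ((2*v+1).choose (v+1) : ℝ) = ((2*v+1).choose v : ℝ) := by
      exact_mod_cast congrArg (Nat.cast (R := ℝ)) (Nat.choose_symm_half v)
    have h2 : (2*(v+1)).choose (v+1) = (2*v+2).choose (v+1) := by congr 1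
    have hv1 : ((v:ℝ) + 1) ≠ 0 := by positivity
    rw [S] at A
    rw [h2]
    rw [div_mul_eq_mul_div, div_eq_iff hv1]
    push_cast at A B ⊢
    linear_combination (4*(v:ℝ)+6) * ih + (2*(v:ℝ)+3) * B + (4*(v:ℝ)+6) * A

lemma key (v : ℕ) : ∀ j, j ≤ v →
    rchoose ((v:ℝ) + 1/2) (v - j) * rchoose ((v:ℝ) - 1/2) j * 4 ^ v
      = ((2*v).choose v : ℝ) * ((2*v+1).choose (2*j+1) : ℝ) := by
  intro j
  induction j with
  | zero =>
    intro _
    simp only [Nat.sub_zero, Nat.mul_zero, Nat.zero_add, rchoose_zero, mul_one,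
      Nat.choose_one_right]
    rw [rchoose_base v]
    push_cast
    ring
  | succ j IH =>
    intro h
    have ih := IH (by omega)
    have hm : v - j = (v - (j+1)) + 1 := by omega
    rw [hm, rchoose_succ] at ih
    rw [rchoose_succ]
    have hc : ((v - (j+1) : ℕ) : ℝ) = (v:ℝ) - (j:ℝ) - 1 := by
      rw [Nat.cast_sub h]; push_cast; ring
    rw [hc] at ih
    have hjv : (j:ℝ) + 1 ≤ (v:ℝ) := by exact_mod_cast h
    have R1 : ((2*v+1).choose (2*j+2) : ℝ) * (2*(j:ℝ)+2)
        = ((2*v+1).choose (2*j+1) : ℝ) * (2*(v:ℝ)-2*j) := by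
      have h0 := Nat.choose_succ_right_eq (2*v+1) (2*j+1)
      have hs : 2*v+1 - (2*j+1) = 2*v - 2*j := by omega
      have he : 2*j+1+1 = 2*j+2 := by omega
      rw [hs, he] at h0
      have h1 := congrArg (Nat.cast (R := ℝ)) h0
      push_cast [Nat.cast_sub (by omega : 2*j ≤ 2*v)] at h1
      linarith [h1]
    have R2 : ((2*v+1).choose (2*j+3) : ℝ) * (2*(j:ℝ)+3)
        = ((2*v+1).choose (2*j+2) : ℝ) * (2*(v:ℝ)-2*j-1) := by
      have h0 := Nat.choose_succ_right_eq (2*v+1) (2*j+2)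
      have hs : 2*v+1 - (2*j+2) = 2*v - (2*j+1) := by omega
      have he : 2*j+2+1 = 2*j+3 := by omega
      rw [hs, he] at h0
      have h1 := congrArg (Nat.cast (R := ℝ)) h0
      push_cast [Nat.cast_sub (by omega : 2*j+1 ≤ 2*v)] at h1
      linarith [h1]
    have hg : 2*(j+1)+1 = 2*j+3 := by omega
    rw [hg]
    have hd1 : (v:ℝ) - (j:ℝ) - 1 + 1 ≠ 0 := by intro hh; linarith
    have hd2 : ((j:ℝ) + 1) ≠ 0 := by positivity
    have hne3 : (2*(j:ℝ) + 3) ≠ 0 := by positivity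
    have hvj : (2:ℝ)*((v:ℝ) - j) ≠ 0 := by intro hh; nlinarith
    field_simp at ih ⊢
    apply mul_right_cancel₀ hne3
    linear_combination (2*(v:ℝ)-2*(j:ℝ)-1) * ih
      - 2*(((2*v).choose v : ℕ):ℝ)*((j:ℝ)+1) * R2
      - (((2*v).choose v : ℕ):ℝ)*(2*(v:ℝ)-2*(j:ℝ)-1) * R1

lemma sum_pair (m : ℕ) (f : ℕ → ℝ) :
    ∑ k ∈ Finset.range (2*m), f k = ∑ j ∈ Finset.range m, (f (2*j) + f (2*j+1)) := by
  induction m with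
  | zero => simp
  | succ m ih =>
    have h : 2*(m+1) = 2*m + 1 + 1 := by ring
    rw [h, Finset.sum_range_succ, Finset.sum_range_succ, ih, Finset.sum_range_succ]
    ring

theorem binomial_sum_identity (v : ℕ) (n : ℝ) (hn : n ≠ 0) :
    ∑ j ∈ Finset.range (v + 1),
        rchoose ((v : ℝ) + 1/2) (v - j) * rchoose ((v : ℝ) - 1/2) j * (1 / n ^ (2 * j + 1)) =
      2 ^ (-(2 * v : ℤ) - 1) * ((2 * v).choose v : ℝ) *
        ((1 + 1 / n) ^ (2 * v + 1) - (1 - 1 / n) ^ (2 * v + 1)) := by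
  set x : ℝ := 1 / n with hx
  have h4 : (4:ℝ)^v ≠ 0 := by positivity
  have hzpow : (2:ℝ) ^ (-(2 * v : ℤ) - 1) = 1 / (2 * 4 ^ v) := by
    rw [show (-(2 * v : ℤ) - 1) = -(2 * v + 1 : ℕ) from by push_cast; ring,
      zpow_neg, zpow_natCast]
    rw [pow_succ, pow_mul]
    norm_num
    ring
  -- LHS
  have hL : ∑ j ∈ Finset.range (v + 1),
      rchoose ((v : ℝ) + 1/2) (v - j) * rchoose ((v : ℝ) - 1/2) j * (1 / n ^ (2 * j + 1)) =
      ∑ j ∈ Finset.range (v + 1),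
        ((2*v).choose v : ℝ) * ((2*v+1).choose (2*j+1) : ℝ) * x ^ (2*j+1) / 4 ^ v := by
    refine Finset.sum_congr rfl fun j hj => ?_
    have hj' : j ≤ v := by simpa [Nat.lt_succ_iff] using Finset.mem_range.mp hj
    have hk := key v j hj'
    have hxp : (1 : ℝ) / n ^ (2*j+1) = x ^ (2*j+1) := by
      rw [hx, div_pow, one_pow]
    rw [hxp, eq_div_iff h4]
    linear_combination x ^ (2*j+1) * hk
  rw [hL]
  -- RHS expansion
  have e1 : (1 + x) ^ (2*v+1) = ∑ k ∈ Finset.range (2*v+1+1), x ^ k * ((2*v+1).choose k : ℝ) := by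
    rw [show (1 + x) = (x + 1) from by ring, add_pow]
    refine Finset.sum_congr rfl fun k _ => by rw [one_pow, mul_one]
  have e2 : (1 - x) ^ (2*v+1) = ∑ k ∈ Finset.range (2*v+1+1), (-x) ^ k * ((2*v+1).choose k : ℝ) := by
    rw [show (1 - x) = (-x + 1) from by ring, add_pow]
    refine Finset.sum_congr rfl fun k _ => by rw [one_pow, mul_one]
  rw [e1, e2, ← Finset.sum_sub_distrib]
  have h2m : 2*v+1+1 = 2*(v+1) := by ring
  rw [h2m, sum_pair]
  rw [Finset.mul_sum]
  refine Finset.sum_congr rfl fun j _ => ?_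
  have heven : (-x) ^ (2*j) = x ^ (2*j) := by
    rw [neg_pow, pow_mul, neg_one_sq, one_pow, one_mul]
  have hodd : (-x) ^ (2*j+1) = -(x ^ (2*j+1)) := by
    rw [pow_succ, neg_pow, pow_mul, neg_one_sq, one_pow, one_mul]; ring
  rw [heven, hodd, hzpow]
  field_simp
  ring
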